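/- The ironed virtual value function is monotone: for all x, x' in the finite support V_j of distribution D_j with x ≤ x', the ironed virtual value satisfies φ̃_j(x) ≤ φ̃_j(x'). -/

import Mathlib

open scoped Classical
open Finset

/-- The `f`-weighted average of `φ` over the values of `V` in the interval `[y, x]`. -/
noncomputable def ironAvg (V : Finset ℝ) (f φ : ℝ → ℝ) (y x : ℝ) : ℝ :=
  (∑ y' ∈ V.filter (fun y' => y ≤ y' ∧ y' ≤ x), f y' * φ y') /
    (∑ y' ∈ V.filter (fun y' => y ≤ y' ∧ y' ≤ x), f y')

/-- The largest `y ∈ V`, `y ≤ x`, maximizing the weighted average `ironAvg V f φ y x`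
(ties broken toward larger values). -/
noncomputable def ironYstar (V : Finset ℝ) (f φ : ℝ → ℝ) (x : ℝ) : ℝ :=
  ((V.filter (fun y => y ≤ x ∧
      ∀ y' ∈ V, y' ≤ x → ironAvg V f φ y' x ≤ ironAvg V f φ y x)).max).unbotD 0

/-- The ironing procedure: starting from the top `x = max V`, find the maximizer
`y* = ironYstar V f φ x`, assign the weighted average `ironAvg V f φ y* x` on
`[y*, x] ∩ V`, and recurse below `y*`.  The fuel `V.card` suffices for termination. -/
noncomputable def ironLoop (V : Finset ℝ) (f φ : ℝ → ℝ) : ℕ → ℝ → ℝ → ℝ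
  | 0, _, _ => 0
  | fuel + 1, x, z =>
      if ironYstar V f φ x ≤ z then ironAvg V f φ (ironYstar V f φ x) x
      else ironLoop V f φ fuel
        (((V.filter (fun y => y < ironYstar V f φ x)).max).unbotD 0) z

section aux

variable (V : Finset ℝ) (f φ : ℝ → ℝ)

private lemma unbot'_max {F : Finset ℝ} (h : F.Nonempty) : (F.max).unbotD 0 = F.max' h := by
  rw [← Finset.coe_max' h]; rfl

private lemma ystar_spec {x : ℝ} (hx : x ∈ V) :
    ironYstar V f φ x ∈ V ∧ ironYstar V f φ x ≤ x ∧
      ∀ y' ∈ V, y' ≤ x → ironAvg V f φ y' x ≤ ironAvg V f φ (ironYstar V f φ x) x := by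
  obtain ⟨y0, hy0, hy0max⟩ := Finset.exists_max_image (V.filter (fun y => y ≤ x))
      (fun y => ironAvg V f φ y x) ⟨x, Finset.mem_filter.2 ⟨hx, le_refl x⟩⟩
  have hne : (V.filter (fun y => y ≤ x ∧
      ∀ y' ∈ V, y' ≤ x → ironAvg V f φ y' x ≤ ironAvg V f φ y x)).Nonempty := by
    refine ⟨y0, Finset.mem_filter.2 ⟨(Finset.mem_filter.1 hy0).1,
      (Finset.mem_filter.1 hy0).2, ?_⟩⟩
    intro y' hy' hy'x
    exact hy0max y' (Finset.mem_filter.2 ⟨hy', hy'x⟩)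
  have heq : ironYstar V f φ x = _ := unbot'_max hne
  rw [ironYstar] at heq ⊢
  rw [heq]
  have hmem := Finset.max'_mem _ hne
  rw [Finset.mem_filter] at hmem
  exact ⟨hmem.1, hmem.2.1, hmem.2.2⟩

private lemma denom_pos (hf : ∀ x ∈ V, 0 < f x) {y x : ℝ} (hy : y ∈ V) (hyx : y ≤ x) :
    0 < ∑ t ∈ V.filter (fun t => y ≤ t ∧ t ≤ x), f t := by
  refine Finset.sum_pos (fun t ht => hf t (Finset.mem_filter.1 ht).1)
    ⟨y, Finset.mem_filter.2 ⟨hy, le_refl y, hyx⟩⟩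

private lemma mediant {a1 a2 w1 w2 : ℝ} (hw1 : 0 < w1) (hw2 : 0 < w2)
    (h : (a1 + a2) / (w1 + w2) ≤ a2 / w2) : a1 / w1 ≤ a2 / w2 := by
  rw [div_le_div_iff₀ (by linarith) hw2] at h
  rw [div_le_div_iff₀ hw1 hw2]
  nlinarith

/-- Key combination lemma: if there is an element of `V` below `y* = ironYstar x`,
and `x1` is the largest such, then for any `y' ∈ V`, `y' ≤ x1`, the average on
`[y', x1]` is at most the average on `[y*, x]`. -/
private lemma key (hf : ∀ x ∈ V, 0 < f x) {x : ℝ} (hx : x ∈ V)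
    (hT : (V.filter (fun y => y < ironYstar V f φ x)).Nonempty)
    {y' : ℝ} (hy' : y' ∈ V)
    (hy'x1 : y' ≤ ((V.filter (fun y => y < ironYstar V f φ x)).max).unbotD 0) :
    ironAvg V f φ y' (((V.filter (fun y => y < ironYstar V f φ x)).max).unbotD 0)
      ≤ ironAvg V f φ (ironYstar V f φ x) x := by
  obtain ⟨hyV, hyx, hymax⟩ := ystar_spec V f φ hx
  set ys := ironYstar V f φ x with hys
  set x1 := ((V.filter (fun y => y < ys)).max).unbotD 0 with hx1def
  have hx1eq : x1 = (V.filter (fun y => y < ys)).max' hT := unbot'_max hT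
  have hx1mem := Finset.max'_mem _ hT
  rw [← hx1eq, Finset.mem_filter] at hx1mem
  have hx1V : x1 ∈ V := hx1mem.1
  have hx1lt : x1 < ys := hx1mem.2
  have hx1max : ∀ t ∈ V, t < ys → t ≤ x1 := by
    intro t ht htlt
    rw [hx1eq]
    refine Finset.le_max' _ t ?_
    rw [Finset.mem_filter]
    exact ⟨ht, htlt⟩
  -- split the interval
  set S1 := V.filter (fun t => y' ≤ t ∧ t ≤ x1) with hS1
  set S2 := V.filter (fun t => ys ≤ t ∧ t ≤ x) with hS2
  set S := V.filter (fun t => y' ≤ t ∧ t ≤ x) with hS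
  have hsplit : S = S1 ∪ S2 := by
    ext t
    simp only [hS, hS1, hS2, Finset.mem_union, Finset.mem_filter]
    constructor
    · rintro ⟨htV, h1, h2⟩
      rcases lt_or_ge t ys with h | h
      · exact Or.inl ⟨htV, h1, hx1max t htV h⟩
      · exact Or.inr ⟨htV, h, h2⟩
    · rintro (⟨htV, h1, h2⟩ | ⟨htV, h1, h2⟩)
      · exact ⟨htV, h1, le_trans h2 (le_trans hx1lt.le hyx)⟩
      · exact ⟨htV, le_trans (le_trans hy'x1 hx1lt.le) h1, h2⟩
  have hdisj : Disjoint S1 S2 := by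
    rw [Finset.disjoint_left]
    intro t ht1 ht2
    have := (Finset.mem_filter.1 ht1).2.2
    have := (Finset.mem_filter.1 ht2).2.1
    linarith [hx1lt]
  have hw1 : 0 < ∑ t ∈ S1, f t := denom_pos V f hf hy' hy'x1
  have hw2 : 0 < ∑ t ∈ S2, f t := denom_pos V f hf hyV hyx
  have hle : ironAvg V f φ y' x ≤ ironAvg V f φ ys x :=
    hymax y' hy' (le_trans (le_trans hy'x1 hx1lt.le) hyx)
  have havg : ironAvg V f φ y' x =
      ((∑ t ∈ S1, f t * φ t) + (∑ t ∈ S2, f t * φ t)) /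
        ((∑ t ∈ S1, f t) + (∑ t ∈ S2, f t)) := by
    rw [ironAvg, ← hS, hsplit, Finset.sum_union hdisj, Finset.sum_union hdisj]
  rw [havg] at hle
  exact mediant hw1 hw2 hle

private lemma step_facts (hf : ∀ x ∈ V, 0 < f x) {x z : ℝ} (hx : x ∈ V) (hz : z ∈ V)
    (h : z < ironYstar V f φ x) :
    ∃ hT : (V.filter (fun y => y < ironYstar V f φ x)).Nonempty,
      ((V.filter (fun y => y < ironYstar V f φ x)).max).unbotD 0 ∈ V ∧
      z ≤ ((V.filter (fun y => y < ironYstar V f φ x)).max).unbotD 0 ∧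
      ((V.filter (fun y => y < ironYstar V f φ x)).max).unbotD 0 < x ∧
      (V.filter (fun y => y ≤ ((V.filter (fun y => y < ironYstar V f φ x)).max).unbotD 0)).card
        < (V.filter (fun y => y ≤ x)).card := by
  obtain ⟨hyV, hyx, _⟩ := ystar_spec V f φ hx
  have hzmem : z ∈ V.filter (fun y => y < ironYstar V f φ x) := by
    rw [Finset.mem_filter]; exact ⟨hz, h⟩
  have hT : (V.filter (fun y => y < ironYstar V f φ x)).Nonempty := ⟨z, hzmem⟩
  have hx1eq := unbot'_max hT
  have hx1mem := Finset.max'_mem _ hT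
  rw [← hx1eq, Finset.mem_filter] at hx1mem
  have hx1x : ((V.filter (fun y => y < ironYstar V f φ x)).max).unbotD 0 < x :=
    lt_of_lt_of_le hx1mem.2 hyx
  have hzx1 : z ≤ ((V.filter (fun y => y < ironYstar V f φ x)).max).unbotD 0 := by
    rw [hx1eq]; exact Finset.le_max' _ z hzmem
  refine ⟨hT, hx1mem.1, hzx1, hx1x, Finset.card_lt_card ?_⟩
  refine Finset.ssubset_iff_of_subset
    (V.monotone_filter_right (fun y _ hy => le_trans hy hx1x.le)) |>.2
    ⟨x, ?_, fun hmem => absurd (Finset.mem_filter.1 hmem).2 (not_le.2 hx1x)⟩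
  rw [Finset.mem_filter]; exact ⟨hx, le_refl x⟩

/-- The loop's result is bounded by the current segment's average. -/
private lemma loop_le (hf : ∀ x ∈ V, 0 < f x) :
    ∀ fuel : ℕ, ∀ x ∈ V, ∀ z ∈ V, z ≤ x →
      (V.filter (fun y => y ≤ x)).card ≤ fuel →
      ironLoop V f φ fuel x z ≤ ironAvg V f φ (ironYstar V f φ x) x := by
  intro fuel
  induction fuel with
  | zero =>
    intro x hx z hz hzx hcard
    exact absurd hcard (by
      simp only [Nat.le_zero, Finset.card_eq_zero, ← Finset.not_nonempty_iff_eq_empty]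
      exact fun h => h ⟨x, Finset.mem_filter.2 ⟨hx, le_refl x⟩⟩)
  | succ fuel ih =>
    intro x hx z hz hzx hcard
    rw [ironLoop]
    split_ifs with h
    · exact le_refl _
    · push_neg at h
      obtain ⟨hT, hx1V, hzx1, hx1x, hcardlt⟩ := step_facts V f φ hf hx hz h
      obtain ⟨hy'V, hy'x1, _⟩ := ystar_spec V f φ hx1V
      calc ironLoop V f φ fuel _ z
          ≤ ironAvg V f φ (ironYstar V f φ _) _ :=
            ih _ hx1V z hz hzx1 (by omega)
        _ ≤ ironAvg V f φ (ironYstar V f φ x) x := key V f φ hf hx hT hy'V hy'x1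

private lemma loop_mono (hf : ∀ x ∈ V, 0 < f x) :
    ∀ fuel : ℕ, ∀ x ∈ V, ∀ z ∈ V, ∀ z' ∈ V, z ≤ z' → z' ≤ x →
      (V.filter (fun y => y ≤ x)).card ≤ fuel →
      ironLoop V f φ fuel x z ≤ ironLoop V f φ fuel x z' := by
  intro fuel
  induction fuel with
  | zero => intro _ _ _ _ _ _ _ _ _; exact le_refl _
  | succ fuel ih =>
    intro x hx z hz z' hz' hzz hz'x hcard
    rw [ironLoop, ironLoop]
    split_ifs with h1 h2 h2
    · exact le_refl _
    · exact absurd (le_trans h1 hzz) h2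
    · push_neg at h1
      obtain ⟨hT, hx1V, hzx1, hx1x, hcardlt⟩ := step_facts V f φ hf hx hz h1
      obtain ⟨hy'V, hy'x1, _⟩ := ystar_spec V f φ hx1V
      calc ironLoop V f φ fuel _ z
          ≤ ironAvg V f φ (ironYstar V f φ _) _ :=
            loop_le V f φ hf fuel _ hx1V z hz hzx1 (by omega)
        _ ≤ ironAvg V f φ (ironYstar V f φ x) x := key V f φ hf hx hT hy'V hy'x1
    · push_neg at h1 h2
      obtain ⟨hT, hx1V, hzx1, hx1x, hcardlt⟩ := step_facts V f φ hf hx hz h1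
      obtain ⟨_, _, hz'x1, _, _⟩ := step_facts V f φ hf hx hz' h2
      exact ih _ hx1V z hz z' hz' hzz hz'x1 (by omega)

end aux

/-- Myerson's (discrete) virtual value: `φ(x) = x` if `x = max V`, and otherwise
`φ(x) = x − (succ(x) − x)·(1 − F(x))/f(x)` where `succ(x)` is the smallest element of
`V` above `x` and `1 − F(x) = Pr_{y ∼ f}(y > x)`. -/
noncomputable def virtVal (V : Finset ℝ) (f : ℝ → ℝ) (x : ℝ) : ℝ :=
  if h : (V.filter (fun y => x < y)).Nonempty then
    x - ((V.filter (fun y => x < y)).min' h - x) *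
        (∑ y ∈ V.filter (fun y => x < y), f y) / f x
  else x

/-- The ironed virtual value `φ̃`, produced by running the ironing procedure on
Myerson's virtual value starting from the top `max V`. -/
noncomputable def ironedVirtVal (V : Finset ℝ) (f : ℝ → ℝ) (z : ℝ) : ℝ :=
  ironLoop V f (virtVal V f) V.card ((V.max).unbotD 0) z

/-- The ironed virtual value function is monotone: for all
`x ≤ x'` in the finite support `V` of the distribution `f`, `φ̃(x) ≤ φ̃(x')`. -/
theorem ironedVirtVal_monotone (V : Finset ℝ) (hV : V.Nonempty) (hVpos : ∀ x ∈ V, 0 ≤ x)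
    (f : ℝ → ℝ) (hf : ∀ x ∈ V, 0 < f x) (hsum : ∑ x ∈ V, f x = 1) :
    ∀ x ∈ V, ∀ x' ∈ V, x ≤ x' → ironedVirtVal V f x ≤ ironedVirtVal V f x' := by
  intro x hx x' hx' hxx
  have hMeq : (V.max).unbotD 0 = V.max' hV := unbot'_max hV
  have hM : (V.max).unbotD 0 ∈ V := by rw [hMeq]; exact Finset.max'_mem _ _
  have hx'M : x' ≤ (V.max).unbotD 0 := by rw [hMeq]; exact Finset.le_max' _ _ hx'
  have hcard : (V.filter (fun y => y ≤ (V.max).unbotD 0)).card ≤ V.card :=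
    Finset.card_filter_le _ _
  exact loop_mono V f (virtVal V f) hf V.card _ hM x hx x' hx' hxx hx'M hcard
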